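/- arXiv:1503.04529 — 2 statements merged into one kernel-verified Lean document; each statement's English description precedes it below -/
import Mathlib

section
/- Let d be a metric on a set X and let Σ ⊆ X be a subset equipped with a measure A such that there exist constants c, R > 0 with A(B(z,ρ) ∩ Σ) ≤ c ρ^{n-1} for all z ∈ X and 0 < ρ ≤ R (an (n−1)-dimensional upper regularity condition), and suppose Σ has finite A-measure and diameter at most R. Then for all α, β ∈ (0, n−1) with α + β > n − 1, there is a constant C₁ such that for all x, y ∈ X with x ≠ y, ∫_Σ d(x,z)^{−α} d(z,y)^{−β} dA(z) ≤ C₁ d(x,y)^{n−1−(α+β)}. -/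
open MeasureTheory Metric

namespace BCIAux

lemma hpow1 {t : ℝ} (ht : 0 ≤ t) (k : ℕ) (e : ℝ) : ((t ^ k : ℝ)) ^ e = t ^ ((k : ℝ) * e) := by
  rw [← Real.rpow_natCast t k, ← Real.rpow_mul ht]

lemma hpow2 {t : ℝ} (ht : 0 ≤ t) (e : ℝ) (k : ℕ) : ((t ^ e : ℝ)) ^ k = t ^ (e * (k : ℝ)) := by
  rw [← Real.rpow_natCast (t ^ e) k, ← Real.rpow_mul ht]

lemma tsum_ofReal_geom (a s : ℝ) (ha : 0 ≤ a) (hs0 : 0 ≤ s) (hs1 : s < 1) :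
    ∑' j : ℕ, ENNReal.ofReal (a * s ^ j) ≤ ENNReal.ofReal (a * (1 - s)⁻¹) := by
  rw [← ENNReal.ofReal_tsum_of_nonneg (fun j => by positivity)
    ((summable_geometric_of_lt_one hs0 hs1).mul_left a)]
  exact le_of_eq (by rw [tsum_mul_left, tsum_geometric_of_lt_one hs0 hs1])

lemma setLIntegral_annuli {X : Type*} [MetricSpace X] [MeasurableSpace X] [BorelSpace X]
    (ν : Measure X) (x : X) (γ : ℝ) (hγ : 0 < γ) (E : Set X) (Rr rr : ℕ → ℝ)
    (hrr : ∀ j, 0 < rr j)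
    (hsub : E ⊆ insert x (⋃ j, ball x (Rr j) \ ball x (rr j))) :
    ∫⁻ z in E, ENNReal.ofReal (dist x z ^ (-γ)) ∂ν
      ≤ ∑' j, ENNReal.ofReal ((rr j) ^ (-γ)) * ν (ball x (Rr j)) := by
  have h1 : ∫⁻ z in E, ENNReal.ofReal (dist x z ^ (-γ)) ∂ν
      ≤ ∫⁻ z in insert x (⋃ j, ball x (Rr j) \ ball x (rr j)),
          ENNReal.ofReal (dist x z ^ (-γ)) ∂ν := lintegral_mono_set hsub
  refine h1.trans ?_
  rw [Set.insert_eq]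
  refine (lintegral_union_le _ _ _).trans ?_
  have h2 : ∫⁻ z in ({x} : Set X), ENNReal.ofReal (dist x z ^ (-γ)) ∂ν = 0 := by
    rw [lintegral_singleton]
    simp [Real.zero_rpow (by linarith : -γ ≠ 0)]
  rw [h2, zero_add]
  refine (lintegral_iUnion_le _ _).trans ?_
  refine ENNReal.tsum_le_tsum fun j => ?_
  have hb : ∀ z ∈ ball x (Rr j) \ ball x (rr j),
      ENNReal.ofReal (dist x z ^ (-γ)) ≤ ENNReal.ofReal ((rr j) ^ (-γ)) := by
    intro z hz
    refine ENNReal.ofReal_le_ofReal ?_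
    have hzd : rr j ≤ dist x z := by
      have h3 := hz.2
      rw [mem_ball, not_lt] at h3
      rwa [dist_comm]
    exact Real.rpow_le_rpow_of_nonpos (hrr j) hzd (by linarith)
  calc ∫⁻ z in ball x (Rr j) \ ball x (rr j), ENNReal.ofReal (dist x z ^ (-γ)) ∂ν
      ≤ ∫⁻ _ in ball x (Rr j) \ ball x (rr j), ENNReal.ofReal ((rr j) ^ (-γ)) ∂ν :=
        setLIntegral_mono measurable_const hb
    _ = ENNReal.ofReal ((rr j) ^ (-γ)) * ν (ball x (Rr j) \ ball x (rr j)) :=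
        setLIntegral_const _ _
    _ ≤ _ := mul_le_mul_right (measure_mono Set.diff_subset) _

lemma cover_in {X : Type*} [MetricSpace X] (x : X) (ρ : ℝ) (hρ : 0 < ρ) :
    ball x ρ ⊆ insert x (⋃ j : ℕ, ball x (ρ * (1/2 : ℝ) ^ j) \ ball x (ρ * (1/2 : ℝ) ^ (j+1))) := by
  classical
  intro z hz
  rcases eq_or_ne z x with h | h
  · exact Set.mem_insert_iff.2 (Or.inl h)
  refine Set.mem_insert_iff.2 (Or.inr ?_)
  have ht0 : 0 < dist z x := dist_pos.2 h
  have ht1 : dist z x < ρ := mem_ball.1 hz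
  have hex : ∃ j : ℕ, ρ * (1/2 : ℝ) ^ j ≤ dist z x := by
    obtain ⟨j, hj⟩ := exists_pow_lt_of_lt_one (x := dist z x / ρ) (y := (1/2 : ℝ))
      (by positivity) (by norm_num)
    refine ⟨j, ?_⟩
    have hj' := (lt_div_iff₀ hρ).1 hj
    linarith
  have hpos : 0 < Nat.find hex := by
    rcases Nat.eq_zero_or_pos (Nat.find hex) with h0 | h1
    · exfalso
      have := Nat.find_spec hex
      rw [h0] at this
      simp only [pow_zero, mul_one] at this
      linarith
    · exact h1
  refine Set.mem_iUnion.2 ⟨Nat.find hex - 1, ?_, ?_⟩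
  · have hmin := Nat.find_min hex (Nat.sub_lt hpos one_pos)
    exact mem_ball.2 (lt_of_not_ge hmin)
  · rw [mem_ball, not_lt]
    rw [Nat.sub_add_cancel hpos]
    exact Nat.find_spec hex

lemma cover_out {X : Type*} [MetricSpace X] (x : X) (ρ : ℝ) (hρ : 0 < ρ) :
    (ball x ρ)ᶜ ⊆ insert x (⋃ j : ℕ, ball x (ρ * 2 ^ (j+1)) \ ball x (ρ * 2 ^ j)) := by
  classical
  intro z hz
  have ht : ρ ≤ dist z x := by
    have := hz
    rw [Set.mem_compl_iff, mem_ball, not_lt] at this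
    exact this
  refine Set.mem_insert_iff.2 (Or.inr ?_)
  have hex : ∃ j : ℕ, dist z x < ρ * 2 ^ (j+1) := by
    obtain ⟨j, hj⟩ := pow_unbounded_of_one_lt (x := dist z x / ρ) (y := (2:ℝ)) (by norm_num)
    refine ⟨j, ?_⟩
    rw [div_lt_iff₀ hρ] at hj
    calc dist z x < 2 ^ j * ρ := hj
      _ ≤ ρ * 2 ^ (j+1) := by rw [pow_succ]; nlinarith [pow_pos (by norm_num : (0:ℝ) < 2) j]
  refine Set.mem_iUnion.2 ⟨Nat.find hex, mem_ball.2 (Nat.find_spec hex), ?_⟩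
  rw [mem_ball, not_lt]
  rcases Nat.eq_zero_or_pos (Nat.find hex) with h0 | hpos
  · rw [h0]; simpa using ht
  · have hmin := Nat.find_min hex (Nat.sub_lt hpos one_pos)
    rw [not_lt] at hmin
    calc ρ * 2 ^ Nat.find hex = ρ * 2 ^ (Nat.find hex - 1 + 1) := by
          rw [Nat.sub_add_cancel hpos]
      _ ≤ dist z x := hmin

lemma inner_est {X : Type*} [MetricSpace X] [MeasurableSpace X] [BorelSpace X]
    (ν : Measure X) (c' m : ℝ) (hc' : 0 ≤ c')
    (hν : ∀ (z : X) (ρ : ℝ), 0 < ρ → ν (ball z ρ) ≤ ENNReal.ofReal (c' * ρ ^ m))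
    (γ : ℝ) (hγ0 : 0 < γ) (hγm : γ < m) :
    ∃ K : ℝ, 0 ≤ K ∧ ∀ (x : X) (ρ : ℝ), 0 < ρ →
      ∫⁻ z in ball x ρ, ENNReal.ofReal (dist x z ^ (-γ)) ∂ν
        ≤ ENNReal.ofReal (K * ρ ^ (m - γ)) := by
  have half0 : (0:ℝ) ≤ 1/2 := by norm_num
  set s : ℝ := (1/2 : ℝ) ^ (m - γ) with hs
  have hs0 : 0 ≤ s := Real.rpow_nonneg half0 _
  have hs1 : s < 1 := Real.rpow_lt_one half0 (by norm_num) (by linarith)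
  have h1s : 0 < 1 - s := by linarith
  refine ⟨c' * (1/2 : ℝ) ^ (-γ) * (1 - s)⁻¹,
    mul_nonneg (mul_nonneg hc' (Real.rpow_nonneg half0 _)) (inv_nonneg.2 h1s.le),
    fun x ρ hρ => ?_⟩
  have key := setLIntegral_annuli ν x γ hγ0 (ball x ρ)
      (fun j => ρ * (1/2 : ℝ) ^ j) (fun j => ρ * (1/2 : ℝ) ^ (j+1))
      (fun j => by positivity) (cover_in x ρ hρ)
  refine key.trans ?_
  have hρm : ρ ^ (m - γ) = ρ ^ m * ρ ^ (-γ) := by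
    rw [show m - γ = m + (-γ) by ring, Real.rpow_add hρ]
  have ident : ∀ j : ℕ, (ρ * (1/2:ℝ) ^ (j+1)) ^ (-γ) * (c' * (ρ * (1/2:ℝ) ^ j) ^ m)
      = (c' * (1/2:ℝ) ^ (-γ) * ρ ^ (m - γ)) * s ^ j := by
    intro j
    rw [Real.mul_rpow hρ.le (by positivity), Real.mul_rpow hρ.le (by positivity),
      hpow1 half0, hpow1 half0, hs, hpow2 half0, hρm]
    have hh : (1/2:ℝ) ^ (((j+1 : ℕ) : ℝ) * (-γ)) * (1/2:ℝ) ^ ((j:ℝ) * m)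
        = (1/2:ℝ) ^ (-γ) * (1/2:ℝ) ^ ((m - γ) * (j:ℝ)) := by
      rw [← Real.rpow_add (by norm_num : (0:ℝ) < 1/2),
        ← Real.rpow_add (by norm_num : (0:ℝ) < 1/2)]
      congr 1
      push_cast
      ring
    linear_combination (c' * ρ ^ m * ρ ^ (-γ)) * hh
  have hterm : ∀ j : ℕ,
      ENNReal.ofReal ((ρ * (1/2 : ℝ) ^ (j+1)) ^ (-γ)) * ν (ball x (ρ * (1/2 : ℝ) ^ j))
        ≤ ENNReal.ofReal ((c' * (1/2:ℝ) ^ (-γ) * ρ ^ (m - γ)) * s ^ j) := by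
    intro j
    calc ENNReal.ofReal ((ρ * (1/2 : ℝ) ^ (j+1)) ^ (-γ)) * ν (ball x (ρ * (1/2 : ℝ) ^ j))
        ≤ ENNReal.ofReal ((ρ * (1/2 : ℝ) ^ (j+1)) ^ (-γ)) *
            ENNReal.ofReal (c' * (ρ * (1/2:ℝ) ^ j) ^ m) :=
          mul_le_mul_right (hν x _ (by positivity)) _
      _ = ENNReal.ofReal ((ρ * (1/2 : ℝ) ^ (j+1)) ^ (-γ) * (c' * (ρ * (1/2:ℝ) ^ j) ^ m)) :=
          (ENNReal.ofReal_mul (Real.rpow_nonneg (by positivity) _)).symm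
      _ = ENNReal.ofReal ((c' * (1/2:ℝ) ^ (-γ) * ρ ^ (m - γ)) * s ^ j) := by rw [ident j]
  refine (ENNReal.tsum_le_tsum hterm).trans ?_
  refine (tsum_ofReal_geom _ s (by positivity) hs0 hs1).trans ?_
  exact ENNReal.ofReal_le_ofReal (le_of_eq (by ring))

lemma outer_est {X : Type*} [MetricSpace X] [MeasurableSpace X] [BorelSpace X]
    (ν : Measure X) (c' m : ℝ) (hc' : 0 ≤ c')
    (hν : ∀ (z : X) (ρ : ℝ), 0 < ρ → ν (ball z ρ) ≤ ENNReal.ofReal (c' * ρ ^ m))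
    (γ : ℝ) (hγ0 : 0 < γ) (hγm : m < γ) :
    ∃ K : ℝ, 0 ≤ K ∧ ∀ (x : X) (ρ : ℝ), 0 < ρ →
      ∫⁻ z in (ball x ρ)ᶜ, ENNReal.ofReal (dist x z ^ (-γ)) ∂ν
        ≤ ENNReal.ofReal (K * ρ ^ (m - γ)) := by
  have two0 : (0:ℝ) ≤ 2 := by norm_num
  set s : ℝ := (2 : ℝ) ^ (m - γ) with hs
  have hs0 : 0 ≤ s := Real.rpow_nonneg two0 _
  have hs1 : s < 1 := Real.rpow_lt_one_of_one_lt_of_neg one_lt_two (by linarith)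
  have h1s : 0 < 1 - s := by linarith
  refine ⟨c' * (2 : ℝ) ^ m * (1 - s)⁻¹,
    mul_nonneg (mul_nonneg hc' (Real.rpow_nonneg two0 _)) (inv_nonneg.2 h1s.le),
    fun x ρ hρ => ?_⟩
  have key := setLIntegral_annuli ν x γ hγ0 ((ball x ρ)ᶜ)
      (fun j => ρ * (2 : ℝ) ^ (j+1)) (fun j => ρ * (2 : ℝ) ^ j)
      (fun j => by positivity) (cover_out x ρ hρ)
  refine key.trans ?_
  have hρm : ρ ^ (m - γ) = ρ ^ m * ρ ^ (-γ) := by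
    rw [show m - γ = m + (-γ) by ring, Real.rpow_add hρ]
  have ident : ∀ j : ℕ, (ρ * (2:ℝ) ^ j) ^ (-γ) * (c' * (ρ * (2:ℝ) ^ (j+1)) ^ m)
      = (c' * (2:ℝ) ^ m * ρ ^ (m - γ)) * s ^ j := by
    intro j
    rw [Real.mul_rpow hρ.le (by positivity), Real.mul_rpow hρ.le (by positivity),
      hpow1 two0, hpow1 two0, hs, hpow2 two0, hρm]
    have hh : (2:ℝ) ^ ((j:ℝ) * (-γ)) * (2:ℝ) ^ (((j+1 : ℕ) : ℝ) * m)
        = (2:ℝ) ^ m * (2:ℝ) ^ ((m - γ) * (j:ℝ)) := by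
      rw [← Real.rpow_add (by norm_num : (0:ℝ) < 2),
        ← Real.rpow_add (by norm_num : (0:ℝ) < 2)]
      congr 1
      push_cast
      ring
    linear_combination (c' * ρ ^ m * ρ ^ (-γ)) * hh
  have hterm : ∀ j : ℕ,
      ENNReal.ofReal ((ρ * (2 : ℝ) ^ j) ^ (-γ)) * ν (ball x (ρ * (2 : ℝ) ^ (j+1)))
        ≤ ENNReal.ofReal ((c' * (2:ℝ) ^ m * ρ ^ (m - γ)) * s ^ j) := by
    intro j
    calc ENNReal.ofReal ((ρ * (2 : ℝ) ^ j) ^ (-γ)) * ν (ball x (ρ * (2 : ℝ) ^ (j+1)))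
        ≤ ENNReal.ofReal ((ρ * (2 : ℝ) ^ j) ^ (-γ)) *
            ENNReal.ofReal (c' * (ρ * (2:ℝ) ^ (j+1)) ^ m) :=
          mul_le_mul_right (hν x _ (by positivity)) _
      _ = ENNReal.ofReal ((ρ * (2 : ℝ) ^ j) ^ (-γ) * (c' * (ρ * (2:ℝ) ^ (j+1)) ^ m)) :=
          (ENNReal.ofReal_mul (Real.rpow_nonneg (by positivity) _)).symm
      _ = ENNReal.ofReal ((c' * (2:ℝ) ^ m * ρ ^ (m - γ)) * s ^ j) := by rw [ident j]
  refine (ENNReal.tsum_le_tsum hterm).trans ?_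
  refine (tsum_ofReal_geom _ s (by positivity) hs0 hs1).trans ?_
  exact ENNReal.ofReal_le_ofReal (le_of_eq (by ring))

end BCIAux

open BCIAux

set_option maxHeartbeats 1000000 in
/-- The boundary convolution inequality (e4): if `A` is an `(n-1)`-dimensionally upper
regular measure on `S ⊆ X` with finite mass and diameter at most `R`, then for
`α, β ∈ (0, n-1)` with `α + β > n - 1` one has
`∫_Σ d(x,z)^{-α} d(z,y)^{-β} dA(z) ≤ C₁ d(x,y)^{n-1-(α+β)}`. -/
theorem boundary_convolution_inequality
    {X : Type*} [MetricSpace X] [MeasurableSpace X] [BorelSpace X]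
    (n : ℕ) (hn : 2 ≤ n) (S : Set X) (A : Measure X)
    (c R : ℝ) (hc : 0 < c) (hR : 0 < R)
    (hreg : ∀ (z : X) (ρ : ℝ), 0 < ρ → ρ ≤ R →
      A (ball z ρ ∩ S) ≤ ENNReal.ofReal (c * ρ ^ ((n : ℝ) - 1)))
    (hfin : A S < ⊤) (hdiam : diam S ≤ R) :
    ∀ α β : ℝ, 0 < α → α < (n : ℝ) - 1 → 0 < β → β < (n : ℝ) - 1 →
      (n : ℝ) - 1 < α + β →
      ∃ C₁ : ℝ, ∀ x y : X, x ≠ y →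
        ∫ z in S, (dist x z) ^ (-α) * (dist z y) ^ (-β) ∂A
          ≤ C₁ * (dist x y) ^ ((n : ℝ) - 1 - (α + β)) := by
  intro α β hα0 hα1 hβ0 hβ1 hαβ
  have hm1 : (1:ℝ) ≤ (n:ℝ) - 1 := by
    have h2n : (2:ℝ) ≤ (n:ℝ) := by exact_mod_cast hn
    linarith
  set m : ℝ := (n:ℝ) - 1 with hmdef
  set μ : Measure X := A.restrict S with hμdef
  set M : ℝ := (A S).toReal with hMdef
  have hM0 : 0 ≤ M := ENNReal.toReal_nonneg
  have hRm : 0 < R ^ m := Real.rpow_pos_of_pos hR _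
  set c' : ℝ := c + M / R ^ m with hc'def
  have hc'0 : 0 < c' := by positivity
  have hμ : ∀ (z : X) (ρ : ℝ), 0 < ρ → μ (ball z ρ) ≤ ENNReal.ofReal (c' * ρ ^ m) := by
    intro z ρ hρ
    rw [hμdef, Measure.restrict_apply measurableSet_ball]
    rcases le_or_gt ρ R with h | h
    · refine (hreg z ρ hρ h).trans (ENNReal.ofReal_le_ofReal ?_)
      have hρm0 : 0 ≤ ρ ^ m := Real.rpow_nonneg hρ.le _
      have hcc : c ≤ c' := by
        rw [hc'def]
        nlinarith [div_nonneg hM0 hRm.le]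
      nlinarith
    · have h1 : A (ball z ρ ∩ S) ≤ A S := measure_mono Set.inter_subset_right
      have h2 : A S = ENNReal.ofReal M := by
        rw [hMdef, ENNReal.ofReal_toReal hfin.ne]
      refine h1.trans ?_
      rw [h2]
      refine ENNReal.ofReal_le_ofReal ?_
      have hRρ : R ^ m ≤ ρ ^ m := Real.rpow_le_rpow hR.le h.le (by linarith)
      have hMeq : M = (M / R ^ m) * R ^ m := by field_simp
      calc M = (M / R ^ m) * R ^ m := hMeq
        _ ≤ (M / R ^ m) * ρ ^ m := by nlinarith [div_nonneg hM0 hRm.le]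
        _ ≤ c' * ρ ^ m := by nlinarith [Real.rpow_nonneg hρ.le m, hc.le]
  obtain ⟨K₁, hK₁0, hK₁⟩ := inner_est μ c' m hc'0.le hμ α hα0 hα1
  obtain ⟨K₂, hK₂0, hK₂⟩ := inner_est μ c' m hc'0.le hμ β hβ0 hβ1
  obtain ⟨K₃, hK₃0, hK₃⟩ := outer_est μ c' m hc'0.le hμ (α+β) (by linarith) hαβ
  refine ⟨(K₁ + K₂ + (4:ℝ) ^ β * K₃) * ((2:ℝ)⁻¹) ^ (m - (α+β)), fun x y hxy => ?_⟩
  have hr0 : 0 < dist x y := dist_pos.2 hxy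
  set r : ℝ := dist x y with hrdef
  have hr2 : 0 < r / 2 := by linarith
  set f : X → ℝ := fun z => dist x z ^ (-α) * dist z y ^ (-β) with hfdef
  have hf0 : ∀ z, 0 ≤ f z := fun z =>
    mul_nonneg (Real.rpow_nonneg dist_nonneg _) (Real.rpow_nonneg dist_nonneg _)
  have hdx : Measurable fun z : X => dist x z := (continuous_const.dist continuous_id).measurable
  have hdy : Measurable fun z : X => dist z y := (continuous_id.dist continuous_const).measurable
  have hfm : Measurable f := (hdx.pow measurable_const).mul (hdy.pow measurable_const)
  -- the three regional estimates
  have hT1 : ∫⁻ z in ball x (r/2), ENNReal.ofReal (f z) ∂μ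
      ≤ ENNReal.ofReal (K₁ * (r/2) ^ (m - (α+β))) := by
    have hb : ∀ z ∈ ball x (r/2), ENNReal.ofReal (f z)
        ≤ ENNReal.ofReal ((r/2) ^ (-β)) * ENNReal.ofReal (dist x z ^ (-α)) := by
      intro z hz
      rw [← ENNReal.ofReal_mul (Real.rpow_nonneg (by positivity) _)]
      refine ENNReal.ofReal_le_ofReal ?_
      have h1 : dist z x < r/2 := mem_ball.1 hz
      have h2 : r ≤ dist x z + dist z y := dist_triangle x z y
      have hzy : r/2 ≤ dist z y := by
        rw [dist_comm z x] at h1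
        linarith
      have h3 : dist z y ^ (-β) ≤ (r/2) ^ (-β) :=
        Real.rpow_le_rpow_of_nonpos hr2 hzy (by linarith)
      have h4 : 0 ≤ dist x z ^ (-α) := Real.rpow_nonneg dist_nonneg _
      calc f z = dist x z ^ (-α) * dist z y ^ (-β) := rfl
        _ ≤ dist x z ^ (-α) * (r/2) ^ (-β) := by nlinarith
        _ = (r/2) ^ (-β) * dist x z ^ (-α) := by ring
    calc ∫⁻ z in ball x (r/2), ENNReal.ofReal (f z) ∂μ
        ≤ ∫⁻ z in ball x (r/2),
            ENNReal.ofReal ((r/2) ^ (-β)) * ENNReal.ofReal (dist x z ^ (-α)) ∂μ :=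
          setLIntegral_mono (measurable_const.mul ((hdx.pow measurable_const).ennreal_ofReal)) hb
      _ = ENNReal.ofReal ((r/2) ^ (-β)) *
            ∫⁻ z in ball x (r/2), ENNReal.ofReal (dist x z ^ (-α)) ∂μ :=
          lintegral_const_mul' _ _ ENNReal.ofReal_ne_top
      _ ≤ ENNReal.ofReal ((r/2) ^ (-β)) * ENNReal.ofReal (K₁ * (r/2) ^ (m - α)) :=
          mul_le_mul_right (hK₁ x (r/2) hr2) _
      _ = ENNReal.ofReal ((r/2) ^ (-β) * (K₁ * (r/2) ^ (m - α))) :=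
          (ENNReal.ofReal_mul (Real.rpow_nonneg (by positivity) _)).symm
      _ = ENNReal.ofReal (K₁ * (r/2) ^ (m - (α+β))) := by
          rw [show m - (α+β) = (m - α) + (-β) by ring, Real.rpow_add hr2]
          ring_nf
  have hT2 : ∫⁻ z in ball y (r/2), ENNReal.ofReal (f z) ∂μ
      ≤ ENNReal.ofReal (K₂ * (r/2) ^ (m - (α+β))) := by
    have hb : ∀ z ∈ ball y (r/2), ENNReal.ofReal (f z)
        ≤ ENNReal.ofReal ((r/2) ^ (-α)) * ENNReal.ofReal (dist y z ^ (-β)) := by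
      intro z hz
      rw [← ENNReal.ofReal_mul (Real.rpow_nonneg (by positivity) _)]
      refine ENNReal.ofReal_le_ofReal ?_
      have h1 : dist z y < r/2 := mem_ball.1 hz
      have h2 : r ≤ dist x z + dist z y := dist_triangle x z y
      have hzx : r/2 ≤ dist x z := by linarith
      have h3 : dist x z ^ (-α) ≤ (r/2) ^ (-α) :=
        Real.rpow_le_rpow_of_nonpos hr2 hzx (by linarith)
      have h4 : 0 ≤ dist z y ^ (-β) := Real.rpow_nonneg dist_nonneg _
      calc f z = dist x z ^ (-α) * dist z y ^ (-β) := rfl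
        _ ≤ (r/2) ^ (-α) * dist z y ^ (-β) := by nlinarith
        _ = (r/2) ^ (-α) * dist y z ^ (-β) := by rw [dist_comm z y]
    calc ∫⁻ z in ball y (r/2), ENNReal.ofReal (f z) ∂μ
        ≤ ∫⁻ z in ball y (r/2),
            ENNReal.ofReal ((r/2) ^ (-α)) * ENNReal.ofReal (dist y z ^ (-β)) ∂μ :=
          setLIntegral_mono (measurable_const.mul
            (((continuous_const.dist continuous_id).measurable.pow
              measurable_const).ennreal_ofReal)) hb
      _ = ENNReal.ofReal ((r/2) ^ (-α)) *
            ∫⁻ z in ball y (r/2), ENNReal.ofReal (dist y z ^ (-β)) ∂μ :=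
          lintegral_const_mul' _ _ ENNReal.ofReal_ne_top
      _ ≤ ENNReal.ofReal ((r/2) ^ (-α)) * ENNReal.ofReal (K₂ * (r/2) ^ (m - β)) :=
          mul_le_mul_right (hK₂ y (r/2) hr2) _
      _ = ENNReal.ofReal ((r/2) ^ (-α) * (K₂ * (r/2) ^ (m - β))) :=
          (ENNReal.ofReal_mul (Real.rpow_nonneg (by positivity) _)).symm
      _ = ENNReal.ofReal (K₂ * (r/2) ^ (m - (α+β))) := by
          rw [show m - (α+β) = (m - β) + (-α) by ring, Real.rpow_add hr2]
          ring_nf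
  have hT3 : ∫⁻ z in (ball x (r/2) ∪ ball y (r/2))ᶜ, ENNReal.ofReal (f z) ∂μ
      ≤ ENNReal.ofReal (((4:ℝ) ^ β * K₃) * (r/2) ^ (m - (α+β))) := by
    have hb : ∀ z ∈ (ball x (r/2) ∪ ball y (r/2))ᶜ,
        ENNReal.ofReal (f z)
          ≤ ENNReal.ofReal ((4:ℝ) ^ β) * ENNReal.ofReal (dist x z ^ (-(α+β))) := by
      intro z hz
      rw [← ENNReal.ofReal_mul (Real.rpow_nonneg (by norm_num) _)]
      refine ENNReal.ofReal_le_ofReal ?_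
      rw [Set.mem_compl_iff, Set.mem_union, not_or] at hz
      have h1 : r/2 ≤ dist z x := by
        have := hz.1; rw [mem_ball, not_lt] at this; exact this
      have h2 : r/2 ≤ dist z y := by
        have := hz.2; rw [mem_ball, not_lt] at this; exact this
      have hdzx : dist x z = dist z x := dist_comm x z
      have hd0 : 0 < dist x z := by rw [hdzx]; linarith
      have h3 : dist x z / 4 ≤ dist z y := by
        rcases le_or_gt (dist x z) (2*r) with h | h
        · linarith
        · have htri : dist x z ≤ r + dist z y := by
            have := dist_triangle x y z
            rw [dist_comm y z] at this
            exact this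
          linarith
      have h4 : dist z y ^ (-β) ≤ (dist x z / 4) ^ (-β) :=
        Real.rpow_le_rpow_of_nonpos (by linarith) h3 (by linarith)
      have h5 : (dist x z / 4 : ℝ) ^ (-β) = (4:ℝ) ^ β * dist x z ^ (-β) := by
        rw [div_eq_mul_inv, Real.mul_rpow dist_nonneg (by norm_num)]
        have h6 : ((4:ℝ)⁻¹) ^ (-β) = (4:ℝ) ^ β := by
          rw [Real.inv_rpow (by norm_num), ← Real.rpow_neg (by norm_num), neg_neg]
        rw [h6]
        ring
      have h7 : dist x z ^ (-α) * dist x z ^ (-β) = dist x z ^ (-(α+β)) := by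
        rw [show -(α+β) = (-α) + (-β) by ring, Real.rpow_add hd0]
      have h8 : 0 ≤ dist x z ^ (-α) := Real.rpow_nonneg dist_nonneg _
      calc f z = dist x z ^ (-α) * dist z y ^ (-β) := rfl
        _ ≤ dist x z ^ (-α) * ((4:ℝ) ^ β * dist x z ^ (-β)) := by
            rw [← h5]
            nlinarith
        _ = (4:ℝ) ^ β * (dist x z ^ (-α) * dist x z ^ (-β)) := by ring
        _ = (4:ℝ) ^ β * dist x z ^ (-(α+β)) := by rw [h7]
    calc ∫⁻ z in (ball x (r/2) ∪ ball y (r/2))ᶜ, ENNReal.ofReal (f z) ∂μ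
        ≤ ∫⁻ z in (ball x (r/2) ∪ ball y (r/2))ᶜ,
            ENNReal.ofReal ((4:ℝ) ^ β) * ENNReal.ofReal (dist x z ^ (-(α+β))) ∂μ :=
          setLIntegral_mono (measurable_const.mul
            ((hdx.pow measurable_const).ennreal_ofReal)) hb
      _ = ENNReal.ofReal ((4:ℝ) ^ β) *
            ∫⁻ z in (ball x (r/2) ∪ ball y (r/2))ᶜ,
              ENNReal.ofReal (dist x z ^ (-(α+β))) ∂μ :=
          lintegral_const_mul' _ _ ENNReal.ofReal_ne_top
      _ ≤ ENNReal.ofReal ((4:ℝ) ^ β) *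
            ∫⁻ z in (ball x (r/2))ᶜ, ENNReal.ofReal (dist x z ^ (-(α+β))) ∂μ :=
          mul_le_mul_right (lintegral_mono_set
            (Set.compl_subset_compl.2 Set.subset_union_left)) _
      _ ≤ ENNReal.ofReal ((4:ℝ) ^ β) * ENNReal.ofReal (K₃ * (r/2) ^ (m - (α+β))) :=
          mul_le_mul_right (hK₃ x (r/2) hr2) _
      _ = ENNReal.ofReal (((4:ℝ) ^ β * K₃) * (r/2) ^ (m - (α+β))) := by
          rw [← ENNReal.ofReal_mul (Real.rpow_nonneg (by norm_num) _)]
          ring_nf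
  have htotal : ∫⁻ z, ENNReal.ofReal (f z) ∂μ
      ≤ ENNReal.ofReal ((K₁ + K₂ + (4:ℝ) ^ β * K₃) * (r/2) ^ (m - (α+β))) := by
    have hcover : (Set.univ : Set X)
        = ball x (r/2) ∪ (ball y (r/2) ∪ (ball x (r/2) ∪ ball y (r/2))ᶜ) := by
      rw [← Set.union_assoc, Set.union_compl_self]
    have hv : 0 ≤ (r/2) ^ (m - (α+β)) := Real.rpow_nonneg hr2.le _
    calc ∫⁻ z, ENNReal.ofReal (f z) ∂μ
        = ∫⁻ z in (Set.univ : Set X), ENNReal.ofReal (f z) ∂μ := (setLIntegral_univ _).symm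
      _ = ∫⁻ z in ball x (r/2) ∪ (ball y (r/2) ∪ (ball x (r/2) ∪ ball y (r/2))ᶜ),
            ENNReal.ofReal (f z) ∂μ := by rw [← hcover]
      _ ≤ (∫⁻ z in ball x (r/2), ENNReal.ofReal (f z) ∂μ)
            + ∫⁻ z in ball y (r/2) ∪ (ball x (r/2) ∪ ball y (r/2))ᶜ,
                ENNReal.ofReal (f z) ∂μ := lintegral_union_le _ _ _
      _ ≤ (∫⁻ z in ball x (r/2), ENNReal.ofReal (f z) ∂μ)
            + ((∫⁻ z in ball y (r/2), ENNReal.ofReal (f z) ∂μ)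
              + ∫⁻ z in (ball x (r/2) ∪ ball y (r/2))ᶜ, ENNReal.ofReal (f z) ∂μ) :=
          add_le_add_right (lintegral_union_le _ _ _) _
      _ ≤ ENNReal.ofReal (K₁ * (r/2) ^ (m - (α+β)))
            + (ENNReal.ofReal (K₂ * (r/2) ^ (m - (α+β)))
              + ENNReal.ofReal (((4:ℝ) ^ β * K₃) * (r/2) ^ (m - (α+β)))) :=
          add_le_add hT1 (add_le_add hT2 hT3)
      _ = ENNReal.ofReal (K₁ * (r/2) ^ (m - (α+β))
            + (K₂ * (r/2) ^ (m - (α+β)) + ((4:ℝ) ^ β * K₃) * (r/2) ^ (m - (α+β)))) := by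
          rw [← ENNReal.ofReal_add (by positivity) (by positivity),
            ← ENNReal.ofReal_add (by positivity) (by positivity)]
      _ = ENNReal.ofReal ((K₁ + K₂ + (4:ℝ) ^ β * K₃) * (r/2) ^ (m - (α+β))) := by
          ring_nf
  have hKsum : 0 ≤ K₁ + K₂ + (4:ℝ) ^ β * K₃ :=
    add_nonneg (add_nonneg hK₁0 hK₂0) (mul_nonneg (Real.rpow_nonneg (by norm_num) _) hK₃0)
  have hint : ∫ z in S, dist x z ^ (-α) * dist z y ^ (-β) ∂A
      = (∫⁻ z, ENNReal.ofReal (f z) ∂μ).toReal := by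
    rw [hμdef]
    exact integral_eq_lintegral_of_nonneg_ae (Filter.Eventually.of_forall hf0)
      hfm.aestronglyMeasurable
  rw [hint]
  have hfinal : (∫⁻ z, ENNReal.ofReal (f z) ∂μ).toReal
      ≤ (K₁ + K₂ + (4:ℝ) ^ β * K₃) * (r/2) ^ (m - (α+β)) :=
    ENNReal.toReal_le_of_le_ofReal
      (mul_nonneg hKsum (Real.rpow_nonneg hr2.le _)) htotal
  refine hfinal.trans (le_of_eq ?_)
  rw [show r / 2 = r * (2:ℝ)⁻¹ by ring,
    Real.mul_rpow (by positivity) (by norm_num)]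
  ring
end

section
/- If Ω is a bounded convex open subset of ℝⁿ with nonempty interior, then the volume function v(x,r) = Vol(B(x,r)∩Ω) satisfies the doubling property (DP): there exist constants C > 0 and r₁ > 0 such that v(x,s) ≤ C (s/r)ⁿ v(x,r) for all x ∈ Ω and 0 < r ≤ s ≤ r₁. -/
open MeasureTheory Metric

/-- A bounded convex open nonempty subset of ℝⁿ satisfies the doubling property (DP):
`v(x,s) ≤ C (s/r)ⁿ v(x,r)` for `x ∈ Ω` and `0 < r ≤ s ≤ r₁`,
where `v(x,r) = Vol(B(x,r) ∩ Ω)`. -/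
theorem convex_doubling_property (n : ℕ) (Ω : Set (EuclideanSpace ℝ (Fin n)))
    (hconv : Convex ℝ Ω) (hopen : IsOpen Ω) (hbdd : Bornology.IsBounded Ω)
    (hne : Ω.Nonempty) :
    ∃ C r₁ : ℝ, 0 < C ∧ 0 < r₁ ∧ ∀ x ∈ Ω, ∀ r s : ℝ, 0 < r → r ≤ s → s ≤ r₁ →
      (volume (ball x s ∩ Ω)).toReal
        ≤ C * (s / r) ^ (n : ℝ) * (volume (ball x r ∩ Ω)).toReal := by
  rcases eq_or_ne n 0 with hn | hn
  · subst hn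
    refine ⟨1, 1, one_pos, one_pos, ?_⟩
    intro x hx r s hr hrs hs1
    have hball : ∀ t : ℝ, 0 < t → ball x t ∩ Ω = Ω := by
      intro t ht
      apply Set.inter_eq_right.2
      intro y _
      have : y = x := Subsingleton.elim y x
      simp [mem_ball, this, ht]
    rw [hball r hr, hball s (hr.trans_le hrs)]
    simp
  · -- main case: n ≥ 1
    have hfr : Module.finrank ℝ (EuclideanSpace ℝ (Fin n)) = n := finrank_euclideanSpace_fin
    haveI : Nonempty (Fin n) := ⟨⟨0, Nat.pos_of_ne_zero hn⟩⟩
    haveI hnt : Nontrivial (EuclideanSpace ℝ (Fin n)) := inferInstance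
    have hV : 0 < volume Ω := hopen.measure_pos volume hne
    have hVfin : volume Ω < ⊤ := hbdd.measure_lt_top
    set D := Metric.diam Ω with hDdef
    have hD : 0 < D := by
      rcases lt_or_eq_of_le (Metric.diam_nonneg (s := Ω)) with h | h
      · exact h
      · exfalso
        have hsub : Ω.Subsingleton := by
          intro a ha b hb
          have := Metric.dist_le_diam_of_mem hbdd ha hb
          rw [← h] at this
          exact dist_le_zero.1 this
        have := hsub.measure_zero (volume : Measure (EuclideanSpace ℝ (Fin n)))
        rw [this] at hV
        exact lt_irrefl _ hV
    set B := (volume (ball (0 : EuclideanSpace ℝ (Fin n)) 1)).toReal with hBdef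
    have hBpos : 0 < B :=
      ENNReal.toReal_pos (measure_ball_pos volume 0 one_pos).ne' measure_ball_lt_top.ne
    set V := (volume Ω).toReal with hVdef
    have hVpos : 0 < V := ENNReal.toReal_pos hV.ne' hVfin.ne
    refine ⟨B * (2 * D) ^ n / V, D, by positivity, hD, ?_⟩
    intro x hx r s hr hrs hsD
    have hs : 0 < s := hr.trans_le hrs
    set c := r / (2 * D) with hcdef
    have hc : 0 < c := by positivity
    have hc1 : c ≤ 1 := by
      rw [hcdef, div_le_one (by positivity)]
      have : r ≤ D := hrs.trans hsD
      linarith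
    -- image of Ω under homothety is inside ball x r ∩ Ω
    have himg : AffineMap.homothety x c '' Ω ⊆ ball x r ∩ Ω := by
      rintro _ ⟨y, hy, rfl⟩
      have hdyx : dist y x ≤ D := Metric.dist_le_diam_of_mem hbdd hy hx
      constructor
      · rw [mem_ball]
        have : AffineMap.homothety x c y - x = c • (y - x) := by
          simp [AffineMap.homothety_apply, vsub_eq_sub, vadd_eq_add, add_sub_cancel_right]
        rw [dist_eq_norm, this, norm_smul, Real.norm_eq_abs, abs_of_pos hc]
        have h1 : ‖y - x‖ ≤ D := by rwa [← dist_eq_norm]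
        calc c * ‖y - x‖ ≤ c * D := by
              exact mul_le_mul_of_nonneg_left h1 hc.le
          _ = r / 2 := by
              rw [hcdef]; field_simp
          _ < r := by linarith
      · have : AffineMap.homothety x c y = (1 - c) • x + c • y := by
          simp only [AffineMap.homothety_apply, vsub_eq_sub, vadd_eq_add]
          module
        rw [this]
        exact hconv hx hy (by linarith) hc.le (by ring)
    have hmeas : ENNReal.ofReal (c ^ n) * volume Ω ≤ volume (ball x r ∩ Ω) := by
      have := measure_mono (μ := volume) himg
      rwa [Measure.addHaar_image_homothety, hfr, abs_of_pos (pow_pos hc n)] at this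
    -- upper bound
    have hub : (volume (ball x s ∩ Ω)).toReal ≤ s ^ n * B := by
      have h1 : volume (ball x s ∩ Ω) ≤ volume (ball x s) :=
        measure_mono Set.inter_subset_left
      have h2 : (volume (ball x s ∩ Ω)).toReal ≤ (volume (ball x s)).toReal :=
        ENNReal.toReal_mono measure_ball_lt_top.ne h1
      have h3 : volume (ball x s) =
          ENNReal.ofReal (s ^ n) * volume (ball (0 : EuclideanSpace ℝ (Fin n)) 1) := by
        rw [Measure.addHaar_ball volume x hs.le, hfr]
      rw [h3] at h2
      rwa [ENNReal.toReal_mul, ENNReal.toReal_ofReal (by positivity)] at h2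
    -- lower bound
    have hlb : c ^ n * V ≤ (volume (ball x r ∩ Ω)).toReal := by
      have hfin : volume (ball x r ∩ Ω) < ⊤ :=
        lt_of_le_of_lt (measure_mono Set.inter_subset_left) measure_ball_lt_top
      have := ENNReal.toReal_mono hfin.ne hmeas
      rwa [ENNReal.toReal_mul, ENNReal.toReal_ofReal (by positivity)] at this
    have hrpow : (s / r) ^ (n : ℝ) = (s / r) ^ n := by
      rw [Real.rpow_natCast]
    rw [hrpow]
    calc (volume (ball x s ∩ Ω)).toReal ≤ s ^ n * B := hub
      _ = B * (2 * D) ^ n / V * (s / r) ^ n * (c ^ n * V) := by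
          rw [hcdef]
          rw [div_pow, div_pow]
          field_simp
      _ ≤ B * (2 * D) ^ n / V * (s / r) ^ n * (volume (ball x r ∩ Ω)).toReal := by
          apply mul_le_mul_of_nonneg_left hlb
          positivity
end
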